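/- Consider the loss function L(w) = (1/(2m))·Σ_{μ=1}^m ‖(∏_{r=1}^R (W^{r,1} + I))x^μ − y^μ‖₂² of a 1-shortcut linear network. For two parameters w₁ = w^{r₁,1}_{i₁,j₁} and w₂ = w^{r₂,1}_{i₂,j₂} lying in different residual units with r₁ > r₂, the second-order partial derivative at the zero weight configuration is: ∂²L/∂w₁∂w₂|_{w=0} = (1/m)·Σ_{μ=1}^m [(x^μ_{i₁} − y^μ_{i₁})·x^μ_{j₂} + x^μ_{j₁}·x^μ_{j₂}] if j₁ = i₂ and i₁ = i₂; (1/m)·Σ_{μ=1}^m (x^μ_{i₁} − y^μ_{i₁})·x^μ_{j₂} if j₁ = i₂ and i₁ ≠ i₂; (1/m)·Σ_{μ=1}^m x^μ_{j₁}·x^μ_{j₂} if j₁ ≠ i₂ and i₁ = i₂; and 0 if j₁ ≠ i₂ and i₁ ≠ i₂. -/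

import Mathlib

noncomputable section

open scoped BigOperators

/-- Matrix–vector product. -/
def mvec {d : ℕ} (M : Fin d → Fin d → ℝ) (v : Fin d → ℝ) : Fin d → ℝ :=
  fun i => ∑ j, M i j * v j

/-- The 1-shortcut linear network: `x ↦ (W^{R,1}+I)⋯(W^{1,1}+I) x`, where the `r`-th
residual unit computes `x ↦ W^{r,1} x + x`. -/
def linNet {d : ℕ} (W : ℕ → Fin d → Fin d → ℝ) : ℕ → (Fin d → ℝ) → (Fin d → ℝ)
  | 0, x => x
  | r + 1, x => fun i => mvec (W r) (linNet W r x) i + linNet W r x i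

/-- The loss function of a 1-shortcut linear network with `R` residual units,
`L(w) = (1/(2m)) ∑_μ ‖(∏_r (W^{r,1}+I)) x^μ − y^μ‖₂²`. -/
def linLoss {d m : ℕ} (R : ℕ) (X Y : Fin m → Fin d → ℝ)
    (W : Fin R → Fin d → Fin d → ℝ) : ℝ :=
  (1 / (2 * (m : ℝ))) * ∑ μ : Fin m, ∑ i,
    (linNet (fun r => if h : r < R then W ⟨r, h⟩ else 0) R (X μ) i - Y μ i) ^ 2

/-- The coordinate direction in weight space corresponding to the parameter `w^{r,1}_{i,j}`. -/
def linDir (R d : ℕ) (r : Fin R) (i j : Fin d) : Fin R → Fin d → Fin d → ℝ :=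
  fun r' i' j' => if r' = r ∧ i' = i ∧ j' = j then 1 else 0

/-- Second-order partial derivative of `f` at `0` along the directions `v₁, v₂`. -/
def d2 {E : Type*} [NormedAddCommGroup E] [NormedSpace ℝ E] (f : E → ℝ) (v₁ v₂ : E) : ℝ :=
  fderiv ℝ (fun w => fderiv ℝ f w v₂) (0 : E) v₁

/-! ### Auxiliary lemmas -/

lemma aux_d2_eq_deriv_deriv {E : Type*} [NormedAddCommGroup E] [NormedSpace ℝ E]
    {f : E → ℝ} (hf : ContDiff ℝ 2 f) (v₁ v₂ : E) :
    d2 f v₁ v₂ = deriv (fun s : ℝ => deriv (fun t : ℝ => f (s • v₁ + t • v₂)) 0) 0 := by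
  have hdf : Differentiable ℝ f := hf.differentiable (by norm_num)
  have h1 : Differentiable ℝ (fderiv ℝ f) :=
    (hf.fderiv_right (m := 1) (by norm_num)).differentiable one_ne_zero
  have hg : DifferentiableAt ℝ (fun w => fderiv ℝ f w v₂) 0 := by
    have := ((ContinuousLinearMap.apply ℝ ℝ v₂).differentiable.comp h1).differentiableAt
      (x := (0:E))
    simpa [Function.comp_def] using this
  have key : ∀ s : ℝ, deriv (fun t : ℝ => f (s • v₁ + t • v₂)) 0 = fderiv ℝ f (s • v₁) v₂ := by
    intro s
    have hc : HasDerivAt (fun t : ℝ => s • v₁ + t • v₂) v₂ 0 := by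
      simpa using ((hasDerivAt_id (0:ℝ)).smul_const v₂).const_add (s • v₁)
    have h2 := ((hdf (s • v₁ + (0:ℝ) • v₂)).hasFDerivAt.comp_hasDerivAt 0 hc)
    simpa [Function.comp_def] using h2.deriv
  rw [funext key]
  have hline : HasDerivAt (fun s : ℝ => s • v₁) v₁ 0 := by
    simpa using (hasDerivAt_id (0:ℝ)).smul_const v₁
  have hg' : HasFDerivAt (fun w => fderiv ℝ f w v₂)
      (fderiv ℝ (fun w => fderiv ℝ f w v₂) 0) ((0:ℝ) • v₁) := by
    simpa using hg.hasFDerivAt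
  have h3 := hg'.comp_hasDerivAt 0 hline
  simpa [d2, Function.comp_def] using h3.deriv.symm

lemma aux_contDiff_linNet {dx R : ℕ} (k : ℕ) (x : Fin dx → ℝ) (i : Fin dx) :
    ContDiff ℝ 2 (fun W : Fin R → Fin dx → Fin dx → ℝ =>
      linNet (fun r => if h : r < R then W ⟨r, h⟩ else 0) k x i) := by
  induction k generalizing i with
  | zero => exact contDiff_const
  | succ k ih =>
      have h1 : ∀ j : Fin dx, ContDiff ℝ 2 (fun W : Fin R → Fin dx → Fin dx → ℝ =>
          (if h : k < R then W ⟨k, h⟩ else 0) i j) := by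
        intro j
        by_cases h : k < R
        · simp only [dif_pos h]
          let p1 : (Fin R → Fin dx → Fin dx → ℝ) →L[ℝ] (Fin dx → Fin dx → ℝ) :=
            ContinuousLinearMap.proj ⟨k, h⟩
          let p2 : (Fin dx → Fin dx → ℝ) →L[ℝ] (Fin dx → ℝ) := ContinuousLinearMap.proj i
          let p3 : (Fin dx → ℝ) →L[ℝ] ℝ := ContinuousLinearMap.proj j
          exact (p3.comp (p2.comp p1)).contDiff
        · simp only [dif_neg h]
          exact contDiff_const
      show ContDiff ℝ 2 (fun W : Fin R → Fin dx → Fin dx → ℝ =>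
        (∑ j, (if h : k < R then W ⟨k, h⟩ else 0) i j *
          linNet (fun r => if h : r < R then W ⟨r, h⟩ else 0) k x j) +
        linNet (fun r => if h : r < R then W ⟨r, h⟩ else 0) k x i)
      exact (ContDiff.sum fun j _ => (h1 j).mul (ih j)).add (ih i)

lemma aux_contDiff_linLoss {dx m R : ℕ} (X Y : Fin m → Fin dx → ℝ) :
    ContDiff ℝ 2 (linLoss R X Y) := by
  unfold linLoss
  exact contDiff_const.mul (ContDiff.sum fun μ _ => ContDiff.sum fun i _ =>
    ((aux_contDiff_linNet R (X μ) i).sub contDiff_const).pow 2)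

lemma aux_Wst_eval {dx R : ℕ} (r₁ r₂ : Fin R) (i₁ j₁ i₂ j₂ : Fin dx) (s t : ℝ) (n : ℕ)
    (i j : Fin dx) :
    (if h : n < R then (s • linDir R dx r₁ i₁ j₁ + t • linDir R dx r₂ i₂ j₂) ⟨n, h⟩ else 0) i j
    = (if n = (r₁ : ℕ) ∧ i = i₁ ∧ j = j₁ then s else 0)
      + (if n = (r₂ : ℕ) ∧ i = i₂ ∧ j = j₂ then t else 0) := by
  by_cases h : n < R
  · have e1 : ((⟨n, h⟩ : Fin R) = r₁) = (n = (r₁ : ℕ)) := by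
      simp [Fin.ext_iff]
    have e2 : ((⟨n, h⟩ : Fin R) = r₂) = (n = (r₂ : ℕ)) := by
      simp [Fin.ext_iff]
    simp only [dif_pos h, Pi.add_apply, Pi.smul_apply, linDir, smul_eq_mul, e1, e2,
      mul_ite, mul_one, mul_zero]
  · have h1 : n ≠ (r₁ : ℕ) := fun e => h (e ▸ r₁.isLt)
    have h2 : n ≠ (r₂ : ℕ) := fun e => h (e ▸ r₂.isLt)
    simp [dif_neg h, h1, h2]

lemma aux_sum_ite_mul {dx : ℕ} (c : ℝ) (j₀ : Fin dx) (p : Prop) [Decidable p]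
    (f : Fin dx → ℝ) :
    (∑ j, (if p ∧ j = j₀ then c else 0) * f j) = if p then c * f j₀ else 0 := by
  by_cases hp : p <;> simp [hp]

lemma aux_linNet_st {dx R : ℕ} (r₁ r₂ : Fin R) (hr : r₂ < r₁) (i₁ j₁ i₂ j₂ : Fin dx) (s t : ℝ)
    (x : Fin dx → ℝ) (k : ℕ) (i : Fin dx) :
    linNet (fun n => if h : n < R then
        (s • linDir R dx r₁ i₁ j₁ + t • linDir R dx r₂ i₂ j₂) ⟨n, h⟩ else 0) k x i
    = x i + (if (r₂ : ℕ) < k then t * (if i = i₂ then x j₂ else 0) else 0)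
      + (if (r₁ : ℕ) < k then
          s * (if i = i₁ then x j₁ else 0) + s * t * (if i = i₁ ∧ j₁ = i₂ then x j₂ else 0)
        else 0) := by
  have hrr : (r₂ : ℕ) < (r₁ : ℕ) := hr
  induction k generalizing i with
  | zero => simp [linNet]
  | succ k ih =>
      set Wf : ℕ → Fin dx → Fin dx → ℝ := fun n => if h : n < R then
        (s • linDir R dx r₁ i₁ j₁ + t • linDir R dx r₂ i₂ j₂) ⟨n, h⟩ else 0 with hWf
      have hval : ∀ (n : ℕ) (a b : Fin dx), Wf n a b
          = (if n = (r₁ : ℕ) ∧ a = i₁ ∧ b = j₁ then s else 0)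
            + (if n = (r₂ : ℕ) ∧ a = i₂ ∧ b = j₂ then t else 0) := by
        intro n a b
        rw [hWf]
        exact aux_Wst_eval r₁ r₂ i₁ j₁ i₂ j₂ s t n a b
      have step : linNet Wf (k+1) x i
          = linNet Wf k x i
            + ((if k = (r₁ : ℕ) ∧ i = i₁ then s * linNet Wf k x j₁ else 0)
              + (if k = (r₂ : ℕ) ∧ i = i₂ then t * linNet Wf k x j₂ else 0)) := by
        show mvec (Wf k) (linNet Wf k x) i + linNet Wf k x i = _
        rw [mvec]
        simp only [hval, add_mul, Finset.sum_add_distrib]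
        have a1 : ∀ j : Fin dx, (if k = (r₁:ℕ) ∧ i = i₁ ∧ j = j₁ then s else 0)
            = (if (k = (r₁:ℕ) ∧ i = i₁) ∧ j = j₁ then s else 0) := by
          intro j; apply if_congr _ rfl rfl; tauto
        have a2 : ∀ j : Fin dx, (if k = (r₂:ℕ) ∧ i = i₂ ∧ j = j₂ then t else 0)
            = (if (k = (r₂:ℕ) ∧ i = i₂) ∧ j = j₂ then t else 0) := by
          intro j; apply if_congr _ rfl rfl; tauto
        simp only [a1, a2, aux_sum_ite_mul]
        ring
      have d1 : (r₂ : ℕ) < 1 + (r₁ : ℕ) := by omega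
      have d2 : ¬ (r₁ : ℕ) = (r₂ : ℕ) := by omega
      have d3 : ¬ r₁ < r₂ := lt_asymm hr
      have d4 : ¬ (r₁ : ℕ) < (r₂ : ℕ) := by omega
      have d5 : ¬ (r₂ : ℕ) = (r₁ : ℕ) := by omega
      have d6 : ¬ (r₁ : ℕ) < 1 + (r₂ : ℕ) := by omega
      have d7 : (r₂ : ℕ) < (r₁ : ℕ) + 1 := by omega
      have d8 : (r₁ : ℕ) < (r₁ : ℕ) + 1 := by omega
      have d9 : ¬ (r₁ : ℕ) < (r₁ : ℕ) := by omega
      have d10 : (r₂ : ℕ) < (r₂ : ℕ) + 1 := by omega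
      have d11 : ¬ (r₁ : ℕ) < (r₂ : ℕ) + 1 := by omega
      have d12 : ¬ (r₂ : ℕ) < (r₂ : ℕ) := by omega
      rw [step, ih i, ih j₁, ih j₂]
      by_cases hk1 : k = (r₁ : ℕ)
      · have c1 : (r₂ : ℕ) < k := by omega
        have c2 : ¬ (r₁ : ℕ) < k := by omega
        have c3 : (r₂ : ℕ) < k + 1 := by omega
        have c4 : (r₁ : ℕ) < k + 1 := by omega
        have c5 : ¬ k = (r₂ : ℕ) := by omega
        subst hk1
        by_cases hA : i = i₁ <;> by_cases hB : j₁ = i₂ <;> by_cases hC : i = i₂ <;>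
          simp [hA, hB, hC, hr, hrr, d1, d2, d3, d4, d5, d6, d7, d8, d9, d10, d11, d12] <;> (try split_ifs) <;> ring
      · by_cases hk2 : k = (r₂ : ℕ)
        · have c1 : ¬ (r₂ : ℕ) < k := by omega
          have c2 : ¬ (r₁ : ℕ) < k := by omega
          have c3 : (r₂ : ℕ) < k + 1 := by omega
          have c4 : ¬ (r₁ : ℕ) < k + 1 := by omega
          simp only [if_neg c1, if_neg c2, if_pos c3, if_neg c4, hk2, hk1, false_and,
            if_false, add_zero, if_neg hk1]
          by_cases hC : i = i₂ <;> simp [hk2, hC, hr, hrr, d1, d2, d3, d4, d5, d6, d7, d8, d9, d10, d11, d12] <;> (try split_ifs) <;> ring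
        · have c1 : ((r₂ : ℕ) < k + 1) = ((r₂ : ℕ) < k) := by
            apply propext; omega
          have c2 : ((r₁ : ℕ) < k + 1) = ((r₁ : ℕ) < k) := by
            apply propext; omega
          simp [c1, c2, hk1, hk2, hr, hrr, d1, d2, d3, d4, d5, d6, d7, d8, d9, d10, d11, d12]

lemma aux_loss_line {dx m R : ℕ} (X Y : Fin m → Fin dx → ℝ)
    (r₁ r₂ : Fin R) (hr : r₂ < r₁) (i₁ j₁ i₂ j₂ : Fin dx) (s t : ℝ) :
    linLoss R X Y (s • linDir R dx r₁ i₁ j₁ + t • linDir R dx r₂ i₂ j₂)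
    = (1 / (2 * (m : ℝ))) * ∑ μ : Fin m, ∑ i,
        (((X μ i - Y μ i) + s * (if i = i₁ then X μ j₁ else 0))
          + t * ((if i = i₂ then X μ j₂ else 0)
              + s * (if i = i₁ ∧ j₁ = i₂ then X μ j₂ else 0))) ^ 2 := by
  unfold linLoss
  congr 1
  apply Finset.sum_congr rfl; intro μ _
  apply Finset.sum_congr rfl; intro i _
  congr 1
  rw [aux_linNet_st r₁ r₂ hr i₁ j₁ i₂ j₂ s t (X μ) R i]
  simp only [if_pos r₁.isLt, if_pos r₂.isLt]
  ring

/-- Theorem 2, part 3: off-diagonal block `A` of the Hessian. For two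
parameters `w₁ = w^{r₁,1}_{i₁,j₁}` and `w₂ = w^{r₂,1}_{i₂,j₂}` in different residual units of a
1-shortcut linear network with `r₁ > r₂`, the second partial of the loss at `w = 0` is given by
the four-case formula depending on whether `j₁ = i₂` and whether `i₁ = i₂`. -/
theorem one_shortcut_hessian_different_units
    {dx m R : ℕ} (X Y : Fin m → Fin dx → ℝ)
    (r₁ r₂ : Fin R) (hr : r₂ < r₁) (i₁ j₁ i₂ j₂ : Fin dx) :
    d2 (linLoss R X Y) (linDir R dx r₁ i₁ j₁) (linDir R dx r₂ i₂ j₂) =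
      if j₁ = i₂ then
        (if i₁ = i₂ then
          (1 / (m : ℝ)) * ∑ μ : Fin m, ((X μ i₁ - Y μ i₁) * X μ j₂ + X μ j₁ * X μ j₂)
        else
          (1 / (m : ℝ)) * ∑ μ : Fin m, (X μ i₁ - Y μ i₁) * X μ j₂)
      else
        (if i₁ = i₂ then (1 / (m : ℝ)) * ∑ μ : Fin m, X μ j₁ * X μ j₂ else 0) := by
  set a : Fin m → Fin dx → ℝ := fun μ i => if i = i₁ then X μ j₁ else 0 with ha
  set b : Fin m → Fin dx → ℝ := fun μ i => if i = i₂ then X μ j₂ else 0 with hb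
  set c : Fin m → Fin dx → ℝ := fun μ i => if i = i₁ ∧ j₁ = i₂ then X μ j₂ else 0 with hc
  have hbase : ∀ (q r : ℝ), HasDerivAt (fun t : ℝ => (q + t * r) ^ 2) (2 * q * r) 0 := by
    intro q r
    have h1 : HasDerivAt (fun t : ℝ => q + t * r) r 0 := by
      simpa using ((hasDerivAt_id (0:ℝ)).mul_const r).const_add q
    simpa using h1.fun_pow 2
  have hinner : ∀ s : ℝ, deriv (fun t : ℝ => linLoss R X Y
        (s • linDir R dx r₁ i₁ j₁ + t • linDir R dx r₂ i₂ j₂)) 0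
      = (1 / (2 * (m : ℝ))) * ∑ μ : Fin m, ∑ i,
          2 * ((X μ i - Y μ i) + s * a μ i) * (b μ i + s * c μ i) := by
    intro s
    have hfun : (fun t : ℝ => linLoss R X Y
        (s • linDir R dx r₁ i₁ j₁ + t • linDir R dx r₂ i₂ j₂))
        = fun t : ℝ => (1 / (2 * (m : ℝ))) * ∑ μ : Fin m, ∑ i,
          (((X μ i - Y μ i) + s * a μ i) + t * (b μ i + s * c μ i)) ^ 2 := by
      funext t
      exact aux_loss_line X Y r₁ r₂ hr i₁ j₁ i₂ j₂ s t
    rw [hfun]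
    have : HasDerivAt (fun t : ℝ => (1 / (2 * (m : ℝ))) * ∑ μ : Fin m, ∑ i,
          (((X μ i - Y μ i) + s * a μ i) + t * (b μ i + s * c μ i)) ^ 2)
        ((1 / (2 * (m : ℝ))) * ∑ μ : Fin m, ∑ i,
          2 * ((X μ i - Y μ i) + s * a μ i) * (b μ i + s * c μ i)) 0 :=
      HasDerivAt.const_mul _ (HasDerivAt.fun_sum fun μ _ => HasDerivAt.fun_sum fun i _ =>
        hbase _ _)
    exact this.deriv
  have houter : HasDerivAt (fun s : ℝ => (1 / (2 * (m : ℝ))) * ∑ μ : Fin m, ∑ i,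
        2 * ((X μ i - Y μ i) + s * a μ i) * (b μ i + s * c μ i))
      ((1 / (2 * (m : ℝ))) * ∑ μ : Fin m, ∑ i,
        2 * (a μ i * b μ i + (X μ i - Y μ i) * c μ i)) 0 := by
    apply HasDerivAt.const_mul
    apply HasDerivAt.fun_sum; intro μ _
    apply HasDerivAt.fun_sum; intro i _
    have h1 : HasDerivAt (fun s : ℝ => (X μ i - Y μ i) + s * a μ i) (a μ i) 0 := by
      simpa using ((hasDerivAt_id (0:ℝ)).mul_const (a μ i)).const_add (X μ i - Y μ i)
    have h2 : HasDerivAt (fun s : ℝ => b μ i + s * c μ i) (c μ i) 0 := by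
      simpa using ((hasDerivAt_id (0:ℝ)).mul_const (c μ i)).const_add (b μ i)
    have h3 := (h1.fun_mul h2).const_mul (2 : ℝ)
    have e : (fun s : ℝ => 2 * (((X μ i - Y μ i) + s * a μ i) * (b μ i + s * c μ i)))
        = fun s : ℝ => 2 * ((X μ i - Y μ i) + s * a μ i) * (b μ i + s * c μ i) := by
      funext s; ring
    rw [e] at h3
    convert h3 using 1
    · rfl
    ring

  have hd2 : d2 (linLoss R X Y) (linDir R dx r₁ i₁ j₁) (linDir R dx r₂ i₂ j₂)
      = (1 / (2 * (m : ℝ))) * ∑ μ : Fin m, ∑ i,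
        2 * (a μ i * b μ i + (X μ i - Y μ i) * c μ i) := by
    rw [aux_d2_eq_deriv_deriv (aux_contDiff_linLoss X Y), funext hinner]
    exact houter.deriv
  have hsum : ∀ μ : Fin m, (∑ i, 2 * (a μ i * b μ i + (X μ i - Y μ i) * c μ i))
      = 2 * ((if i₁ = i₂ then X μ j₁ * X μ j₂ else 0)
          + (if j₁ = i₂ then (X μ i₁ - Y μ i₁) * X μ j₂ else 0)) := by
    intro μ
    have e1 : (∑ i, a μ i * b μ i) = if i₁ = i₂ then X μ j₁ * X μ j₂ else 0 := by
      by_cases h12 : i₁ = i₂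
      · subst h12
        simp [ha, hb, ite_and, Finset.sum_ite_eq']
      · rw [if_neg h12]
        apply Finset.sum_eq_zero
        intro i _
        rcases eq_or_ne i i₂ with hB | hB
        · have hA : i ≠ i₁ := fun e => h12 (e.symm.trans hB)
          simp [ha, hA]
        · simp [hb, hB]
    have e2 : (∑ i, (X μ i - Y μ i) * c μ i)
        = if j₁ = i₂ then (X μ i₁ - Y μ i₁) * X μ j₂ else 0 := by
      by_cases hj : j₁ = i₂
      · simp [hc, hj, mul_ite, mul_zero, Finset.sum_ite_eq']
      · simp [hc, hj]
    calc (∑ i, 2 * (a μ i * b μ i + (X μ i - Y μ i) * c μ i))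
        = 2 * ((∑ i, a μ i * b μ i) + (∑ i, (X μ i - Y μ i) * c μ i)) := by
          rw [← Finset.mul_sum, Finset.sum_add_distrib]
      _ = _ := by rw [e1, e2]
  have hm : (1 / (2 * (m : ℝ))) * 2 = 1 / (m : ℝ) := by
    rcases eq_or_ne (m : ℝ) 0 with h | h
    · simp [h]
    · field_simp
  have hd2' : d2 (linLoss R X Y) (linDir R dx r₁ i₁ j₁) (linDir R dx r₂ i₂ j₂)
      = (1 / (m : ℝ)) * ∑ μ : Fin m, ((if i₁ = i₂ then X μ j₁ * X μ j₂ else 0)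
          + (if j₁ = i₂ then (X μ i₁ - Y μ i₁) * X μ j₂ else 0)) := by
    rw [hd2, Finset.sum_congr rfl fun μ _ => hsum μ, ← Finset.mul_sum, ← mul_assoc, hm]
  rw [hd2']
  by_cases hj : j₁ = i₂ <;> by_cases hi : i₁ = i₂ <;>
    simp only [hj, hi, if_true, if_false, if_pos, if_neg, ite_true, ite_false] <;>
    [skip; skip; skip; simp] <;>
    (congr 1; apply Finset.sum_congr rfl; intro μ _; ring)

end
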